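/- In vacuum (ρ = p = 0) the Friedmann equations of semi-symmetric metric gravity force H(t) = ω(t); in particular, for constant ω = ω₀ the scale factor satisfying ȧ/a = ω₀ with a(0) = a₀ is a(t) = a₀ e^{ω₀ t}, a de Sitter expansion. -/

import Mathlib

/-- In vacuum (`ρ = p = 0`) the first generalized Friedmann equation forces
`H(t) = ω(t)`; in particular, for constant `ω = ω₀`, the scale factor with
`ȧ/a = ω₀` and `a(0) = a₀` is the de Sitter expansion `a(t) = a₀ e^{ω₀ t}`. -/
theorem vacuum_de_sitter
    (H ω : ℝ → ℝ)
    (hF1 : ∀ t, 3 * H t ^ 2 = 8 * Real.pi * 0 - 3 * ω t ^ 2 + 6 * H t * ω t) :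
    (∀ t, H t = ω t) ∧
    (∀ (ω₀ a₀ : ℝ) (a : ℝ → ℝ),
      (∀ t, HasDerivAt a (ω₀ * a t) t) → a 0 = a₀ →
      ∀ t, a t = a₀ * Real.exp (ω₀ * t)) := by
  constructor
  · intro t
    have h := hF1 t
    have h2 : (H t - ω t) ^ 2 = 0 := by nlinarith
    have h3 : H t - ω t = 0 := by
      exact pow_eq_zero_iff (two_ne_zero) |>.mp h2
    linarith
  · intro ω₀ a₀ a hderiv h0 t
    set g : ℝ → ℝ := fun v => a v * Real.exp (-(ω₀ * v)) with hg_def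
    have hg : ∀ u : ℝ, HasDerivAt g 0 u := by
      intro u
      have h1 : HasDerivAt (fun v : ℝ => Real.exp (-(ω₀ * v)))
          (Real.exp (-(ω₀ * u)) * (-ω₀)) u := by
        have h0' : HasDerivAt (fun v : ℝ => -(ω₀ * v)) (-ω₀) u := by
          exact ((hasDerivAt_id u).const_mul ω₀).neg.congr_deriv (by ring)
        simpa [Function.comp_def] using (Real.hasDerivAt_exp (-(ω₀ * u))).comp u h0'
      have h2 := (hderiv u).mul h1
      refine h2.congr_deriv ?_
      ring
    have hdiff : Differentiable ℝ g := fun u => (hg u).differentiableAt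
    have hderiv0 : ∀ u, deriv g u = 0 := fun u => (hg u).deriv
    have hconst := is_const_of_deriv_eq_zero hdiff hderiv0
    have key : g t = a₀ := by
      have := hconst t 0
      simpa [hg_def, h0] using this
    have hexp : Real.exp (-(ω₀ * t)) ≠ 0 := Real.exp_ne_zero _
    have : a t = a₀ / Real.exp (-(ω₀ * t)) := by
      simp only [hg_def] at key; field_simp
      linarith [key]
    rw [this, Real.exp_neg]; field_simp
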